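/- Let I = (G, T, R, k, l) be an MMCU instance where G is a multigraph, and let uv ∈ E(G) be an edge with multiplicity more than l + 1. Then for every minimal solution (X, F) of I, the set F contains no copy of the edge uv. -/

import Mathlib

/-- A multigraph on vertex type `V` with edge type `E`: each edge has an
unordered pair of endpoints. -/
structure Multigraph (V : Type*) (E : Type*) where
  ends : E → Sym2 V

namespace Multigraph

variable {V E : Type*}

/-- The multigraph has no self-loops. -/
def Loopless (G : Multigraph V E) : Prop := ∀ e : E, ¬ (G.ends e).IsDiag

/-- Two vertices are adjacent if some edge joins them. -/
def Adj (G : Multigraph V E) (a b : V) : Prop := ∃ e : E, G.ends e = s(a, b)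

/-- The (open) neighbourhood of a vertex. -/
def nbhd (G : Multigraph V E) (v : V) : Set V := {u | G.Adj v u}

/-- The neighbourhood `N_G(D)` of a set of vertices. -/
def setNbhd (G : Multigraph V E) (D : Set V) : Set V :=
  {u | u ∉ D ∧ ∃ d ∈ D, G.Adj u d}

/-- One step along an edge of `G − (X, F)`. -/
def Step (G : Multigraph V E) (X : Set V) (F : Set E) (a b : V) : Prop :=
  a ∉ X ∧ b ∉ X ∧ ∃ e : E, e ∉ F ∧ G.ends e = s(a, b)

/-- `u` and `v` lie in the same connected component of `G − (X, F)`. -/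
def Conn (G : Multigraph V E) (X : Set V) (F : Set E) (u v : V) : Prop :=
  u ∉ X ∧ v ∉ X ∧ Relation.ReflTransGen (G.Step X F) u v

end Multigraph

/-- `R` is an equivalence relation on the set `T` (and vanishes outside `T`). -/
def IsEquivOn {V : Type*} (T : Set V) (R : V → V → Prop) : Prop :=
  (∀ u v, R u v → u ∈ T ∧ v ∈ T) ∧ (∀ u ∈ T, R u u) ∧
    (∀ u v, R u v → R v u) ∧ (∀ u v w, R u v → R v w → R u w)

/-- `(X, F)` is a solution to the MMCU instance `(G, T, R, k, l)`. -/
def IsSolution {V E : Type*} (G : Multigraph V E) (T : Set V) (R : V → V → Prop)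
    (k l : ℕ) (X : Set V) (F : Set E) : Prop :=
  X ⊆ Tᶜ ∧ X.ncard ≤ k ∧ F.ncard ≤ l ∧
    ∀ u ∈ T, ∀ v ∈ T, (G.Conn X F u v ↔ R u v)

/-- `(X, F)` is a minimal solution to the MMCU instance `(G, T, R, k, l)`. -/
def IsMinSolution {V E : Type*} (G : Multigraph V E) (T : Set V) (R : V → V → Prop)
    (k l : ℕ) (X : Set V) (F : Set E) : Prop :=
  IsSolution G T R k l X F ∧
    ∀ X' F', IsSolution G T R k l X' F' → X' ⊆ X → F' ⊆ F → X' = X ∧ F' = F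

/-- If the edge `uv` has multiplicity more than `l + 1` in the
multigraph `G`, then no minimal solution `(X, F)` contains any copy of `uv` in `F`. -/
theorem stmt9 {V E : Type*} [Fintype V] [Fintype E]
    (G : Multigraph V E) (hG : G.Loopless)
    (T : Set V) (R : V → V → Prop) (hR : IsEquivOn T R) (k l : ℕ)
    (u v : V) (hmult : l + 1 < {e : E | G.ends e = s(u, v)}.ncard)
    (X : Set V) (F : Set E) (h : IsMinSolution G T R k l X F) :
    ∀ e : E, G.ends e = s(u, v) → e ∉ F := by
  intro e he heF
  obtain ⟨hsol, hmin⟩ := h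
  obtain ⟨hX, hk, hl, hconn⟩ := hsol
  have hns : ¬ {e : E | G.ends e = s(u, v)} ⊆ F := by
    intro hsub
    have := Set.ncard_le_ncard hsub (Set.toFinite F)
    omega
  obtain ⟨e₀, he₀, he₀F⟩ := Set.not_subset.mp hns
  set F' := F \ {e : E | G.ends e = s(u, v)} with hF'
  have hstep : ∀ a b, G.Step X F' a b ↔ G.Step X F a b := by
    intro a b
    constructor
    · rintro ⟨ha, hb, e', he'F', hends⟩
      refine ⟨ha, hb, ?_⟩
      by_cases h1 : e' ∈ F
      · have hc : G.ends e' = s(u, v) := by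
          by_contra hne
          exact he'F' ⟨h1, hne⟩
        exact ⟨e₀, he₀F, by rw [he₀, ← hends, hc]⟩
      · exact ⟨e', h1, hends⟩
    · rintro ⟨ha, hb, e', he'F, hends⟩
      exact ⟨ha, hb, e', fun hc => he'F hc.1, hends⟩
  have hconn' : ∀ a b, G.Conn X F' a b ↔ G.Conn X F a b := by
    intro a b
    constructor <;> rintro ⟨ha, hb, hpath⟩
    · exact ⟨ha, hb, Relation.ReflTransGen.mono (fun x y hxy => (hstep x y).mp hxy) a b hpath⟩
    · exact ⟨ha, hb, Relation.ReflTransGen.mono (fun x y hxy => (hstep x y).mpr hxy) a b hpath⟩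
  have hsol' : IsSolution G T R k l X F' := by
    refine ⟨hX, hk, le_trans (Set.ncard_le_ncard Set.diff_subset (Set.toFinite F)) hl, ?_⟩
    intro a ha b hb
    rw [hconn' a b]
    exact hconn a ha b hb
  obtain ⟨-, hFeq⟩ := hmin X F' hsol' subset_rfl Set.diff_subset
  rw [← hFeq] at heF
  exact heF.2 he
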